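/- Let β ∈ (0, 1/3), set c = cos(2πβ) (so c > −1/2), and let n ∈ ℕ. Then the limit, as ω → ωₙ* with ω ∈ Ĩⁿ(β) and ω ≠ ωₙ*, of (√(g_β(ω)² − 4) − (1 + 2c)/√(2 + 2c)) / cos²(ωL) equals −9(3 + 2c)/((1 + 2c)·√(2 + 2c)). (This is the second-order expansion of √(g_β² − 4) at the Dirac frequency ωₙ*.) -/

import Mathlib

open Real Filter Topology

/-- The edge length `L = 1/√3`. -/
noncomputable def L : ℝ := 1 / Real.sqrt 3

/-- The Dirac frequency `ωₙ* = (2n+1)π/(2L)`. -/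
noncomputable def ωstar (n : ℕ) : ℝ := (2 * n + 1) * π / (2 * L)

/-- `g_β(ω) = (9·cos²(ωL) − 3 − 2·cos(2πβ)) / √(2 + 2·cos(2πβ))`. -/
noncomputable def g (β ω : ℝ) : ℝ :=
  (9 * Real.cos (ω * L) ^ 2 - 3 - 2 * Real.cos (2 * π * β)) /
    Real.sqrt (2 + 2 * Real.cos (2 * π * β))

/-- `a(β) = arccos(√(3 + 2·cos(2πβ) − 2·√(2 + 2·cos(2πβ)))/3)`. -/
noncomputable def aβ (β : ℝ) : ℝ :=
  Real.arccos (Real.sqrt (3 + 2 * Real.cos (2 * π * β) -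
    2 * Real.sqrt (2 + 2 * Real.cos (2 * π * β))) / 3)

/-- The open interval `Ĩⁿ(β) = (nπ/L + a(β)/L, (n+1)π/L − a(β)/L)`. -/
noncomputable def Itilde (β : ℝ) (n : ℕ) : Set ℝ :=
  Set.Ioo (n * π / L + aβ β / L) ((n + 1) * π / L - aβ β / L)

set_option maxHeartbeats 1000000 in
theorem stmt_13 (β : ℝ) (hβ0 : 0 < β) (hβ1 : β < 1 / 3) (n : ℕ) :
    Tendsto
      (fun ω : ℝ =>
        (Real.sqrt (g β ω ^ 2 - 4) -
            (1 + 2 * Real.cos (2 * π * β)) / Real.sqrt (2 + 2 * Real.cos (2 * π * β))) /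
          Real.cos (ω * L) ^ 2)
      (𝓝[Itilde β n \ {ωstar n}] (ωstar n))
      (𝓝 (-(9 * (3 + 2 * Real.cos (2 * π * β))) /
        ((1 + 2 * Real.cos (2 * π * β)) * Real.sqrt (2 + 2 * Real.cos (2 * π * β))))) := by
  have hL3 : L = 1 / Real.sqrt 3 := rfl
  have hLpos : 0 < L := by rw [hL3]; positivity
  set c := Real.cos (2 * π * β) with hc
  have hπ := Real.pi_pos
  -- c > -1/2
  have hcgt : -(1/2) < c := by
    have h1 : 2 * π * β < 2 * π / 3 := by nlinarith
    have h2 : (0:ℝ) ≤ 2 * π * β := by positivity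
    have h3 : 2 * π / 3 ≤ π := by nlinarith
    have := Real.cos_lt_cos_of_nonneg_of_le_pi h2 h3 h1
    have hval : Real.cos (2 * π / 3) = -(1/2) := by
      have : (2 * π / 3) = π - π/3 := by ring
      rw [this, Real.cos_pi_sub, Real.cos_pi_div_three]
    linarith [hval ▸ this]
  have h1c : 0 < 1 + 2 * c := by linarith
  have h2c : 0 < 2 + 2 * c := by linarith
  set s := Real.sqrt (2 + 2 * c) with hs
  have hspos : 0 < s := Real.sqrt_pos.mpr h2c
  have hssq : s ^ 2 = 2 + 2 * c := Real.sq_sqrt h2c.le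
  -- the auxiliary function u and its derivative at 0
  set q : ℝ → ℝ := fun x => (9 * x - 3 - 2 * c) ^ 2 - 4 * (2 + 2 * c) with hqdef
  set u : ℝ → ℝ := fun x => Real.sqrt (q x) with hudef
  have hq0 : q 0 = (1 + 2 * c) ^ 2 := by simp only [hqdef]; ring
  have hq0ne : q 0 ≠ 0 := by rw [hq0]; positivity
  have hu0 : u 0 = 1 + 2 * c := by
    rw [hudef]; simp only [hq0]; exact Real.sqrt_sq h1c.le
  have hlin : HasDerivAt (fun x : ℝ => 9 * x - 3 - 2 * c) 9 0 := by
    simpa using (((hasDerivAt_id (0:ℝ)).const_mul 9).sub_const 3).sub_const (2*c)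
  have hqd : HasDerivAt q (2 * (9 * (0:ℝ) - 3 - 2 * c) ^ 1 * 9) 0 := by
    exact (hlin.pow 2).sub_const (4 * (2 + 2 * c))
  have hud : HasDerivAt u ((2 * (9 * (0:ℝ) - 3 - 2 * c) ^ 1 * 9) / (2 * Real.sqrt (q 0))) 0 :=
    hqd.sqrt hq0ne
  have hsq0 : Real.sqrt (q 0) = 1 + 2 * c := by
    rw [hq0]; exact Real.sqrt_sq h1c.le
  have hslope : Tendsto (slope u 0) (𝓝[≠] 0)
      (𝓝 ((2 * (9 * (0:ℝ) - 3 - 2 * c) ^ 1 * 9) / (2 * Real.sqrt (q 0)))) :=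
    hasDerivAt_iff_tendsto_slope.mp hud
  -- on the punctured interval, cos (ω L) ≠ 0
  have haβ : 0 ≤ aβ β := Real.arccos_nonneg _
  have hLne : L ≠ 0 := hLpos.ne'
  have hcosne : ∀ ω ∈ Itilde β n \ {ωstar n}, Real.cos (ω * L) ≠ 0 := by
    rintro ω ⟨⟨hω1, hω2⟩, hωne⟩ hcos0
    obtain ⟨k, hk⟩ := Real.cos_eq_zero_iff.mp hcos0
    have hωL1 : n * π + aβ β < ω * L := by
      have h := mul_lt_mul_of_pos_right hω1 hLpos
      rw [add_mul, div_mul_cancel₀ _ hLne, div_mul_cancel₀ _ hLne] at h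
      exact h
    have hωL2 : ω * L < (n + 1) * π - aβ β := by
      have h := mul_lt_mul_of_pos_right hω2 hLpos
      rw [sub_mul, div_mul_cancel₀ _ hLne, div_mul_cancel₀ _ hLne] at h
      exact h
    have hkl : (2 * (n:ℝ)) < 2 * (k:ℝ) + 1 := by
      rw [hk] at hωL1; nlinarith
    have hkr : 2 * (k:ℝ) + 1 < 2 * (n:ℝ) + 2 := by
      rw [hk] at hωL2; nlinarith
    have hkn : (k : ℤ) = n := by
      have h1 : (2 * (n:ℤ)) < 2 * k + 1 := by exact_mod_cast hkl
      have h2 : 2 * (k:ℤ) + 1 < 2 * n + 2 := by exact_mod_cast hkr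
      omega
    apply hωne
    have : ω * L = (2 * (n:ℝ) + 1) * π / 2 := by rw [hk, hkn]; push_cast; ring
    have : ω = (2 * (n:ℝ) + 1) * π / (2 * L) := by
      field_simp at this ⊢; linarith
    simpa [ωstar] using this
  -- cos(ωstar n * L) = 0
  have hcosstar : Real.cos (ωstar n * L) = 0 := by
    have h1 : ωstar n * L = (n:ℝ) * π + π / 2 := by
      simp only [ωstar]; field_simp
    rw [h1, Real.cos_add, Real.cos_pi_div_two, Real.sin_pi_div_two, Real.sin_nat_mul_pi]
    ring
  -- the inner map tendsto 𝓝[≠] 0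
  have hx : Tendsto (fun ω : ℝ => Real.cos (ω * L) ^ 2) (𝓝[Itilde β n \ {ωstar n}] (ωstar n))
      (𝓝[≠] 0) := by
    rw [tendsto_nhdsWithin_iff]
    constructor
    · have hcont : Continuous (fun ω : ℝ => Real.cos (ω * L) ^ 2) :=
        (Real.continuous_cos.comp (continuous_id.mul continuous_const)).pow 2
      have h0 : Real.cos (ωstar n * L) ^ 2 = 0 := by rw [hcosstar]; ring
      exact h0 ▸ (hcont.tendsto (ωstar n)).mono_left nhdsWithin_le_nhds
    · filter_upwards [eventually_mem_nhdsWithin] with ω hω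
      simp only [Set.mem_compl_iff, Set.mem_singleton_iff]
      exact pow_ne_zero 2 (hcosne ω hω)
  -- composed limit
  have hmain : Tendsto (fun ω : ℝ => slope u 0 (Real.cos (ω * L) ^ 2) / s)
      (𝓝[Itilde β n \ {ωstar n}] (ωstar n))
      (𝓝 (((2 * (9 * (0:ℝ) - 3 - 2 * c) ^ 1 * 9) / (2 * Real.sqrt (q 0))) / s)) :=
    (hslope.comp hx).div_const s
  have hval : ((2 * (9 * (0:ℝ) - 3 - 2 * c) ^ 1 * 9) / (2 * Real.sqrt (q 0))) / s
      = -(9 * (3 + 2 * c)) / ((1 + 2 * c) * s) := by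
    rw [hsq0]; field_simp; ring
  rw [hval] at hmain
  refine hmain.congr' ?_
  filter_upwards [eventually_mem_nhdsWithin] with ω hω
  have hcosne' := hcosne ω hω
  have hx2 : Real.cos (ω * L) ^ 2 ≠ 0 := pow_ne_zero 2 hcosne'
  have hg2 : g β ω ^ 2 - 4 = (1 / s) ^ 2 * q (Real.cos (ω * L) ^ 2) := by
    simp only [g, hqdef, ← hc, ← hs, div_pow]
    field_simp
    nlinarith [hssq]
  have hsqrtg : Real.sqrt (g β ω ^ 2 - 4) = Real.sqrt (q (Real.cos (ω * L) ^ 2)) / s := by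
    rw [hg2, Real.sqrt_mul (by positivity), Real.sqrt_sq (by positivity : (0:ℝ) ≤ 1 / s)]
    ring
  rw [slope_def_field]
  have hux : u (Real.cos (ω * L) ^ 2) = Real.sqrt (q (Real.cos (ω * L) ^ 2)) := rfl
  rw [hux, hu0, hsqrtg, sub_zero]
  generalize Real.sqrt (q (Real.cos (ω * L) ^ 2)) = t
  field_simp
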